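/- Let T be an infinite Young tableau distributed according to the Plancherel measure of infinite order, and let q_n be the natural (lazy) parametrization of its jeu de taquin path, i.e. q_n = p_{K(n)} where K(n) is the maximal k with T_{p_k} ≤ n. Then for each n, q_n has the same distribution as d_n, the position of the box added at step n of the Plancherel growth process. -/

import Mathlib

open MeasureTheory

structure SYT (μ : YoungDiagram) where
  entry : ℕ → ℕ → ℕ
  mem_iff : ∀ i j, (i, j) ∈ μ ↔ 1 ≤ entry i j
  le_card : ∀ i j, entry i j ≤ μ.card
  injOn : ∀ i j i' j', (i, j) ∈ μ → (i', j') ∈ μ → entry i j = entry i' j' →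
    (i, j) = (i', j')
  row_lt : ∀ i j, (i, j + 1) ∈ μ → entry i j < entry i (j + 1)
  col_lt : ∀ i j, (i + 1, j) ∈ μ → entry i j < entry (i + 1) j

noncomputable def fSYT (μ : YoungDiagram) : ℕ := Nat.card (SYT μ)

def YDcovers (μ ν : YoungDiagram) : Prop := μ.cells ⊆ ν.cells ∧ ν.card = μ.card + 1

def jdtStepF (t : ℕ → ℕ → ℕ) (c : ℕ × ℕ) : ℕ × ℕ :=
  if t (c.1 + 1) c.2 ≠ 0 ∧ (t c.1 (c.2 + 1) = 0 ∨ t (c.1 + 1) c.2 < t c.1 (c.2 + 1)) then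
    (c.1 + 1, c.2)
  else (c.1, c.2 + 1)

def jdtPathF (t : ℕ → ℕ → ℕ) : ℕ → ℕ × ℕ := fun k => (jdtStepF t)^[k] (0, 0)

open scoped Classical in
noncomputable def jdtF (t : ℕ → ℕ → ℕ) : ℕ → ℕ → ℕ := fun i j =>
  if ∃ k, jdtPathF t k = (i, j) then
    t (jdtStepF t (i, j)).1 (jdtStepF t (i, j)).2 - 1
  else t i j - 1

def IsInfYT (t : ℕ → ℕ → ℕ) : Prop :=
  (∀ i j, 1 ≤ t i j) ∧ (∀ n, 1 ≤ n → ∃! c : ℕ × ℕ, t c.1 c.2 = n) ∧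
  (∀ i j, t i j < t i (j + 1)) ∧ (∀ i j, t i j < t (i + 1) j)

def cylEvent (μ : YoungDiagram) (s : SYT μ) : Set (ℕ → ℕ → ℕ) :=
  { t | ∀ i j, (i, j) ∈ μ → t i j = s.entry i j }

def PlancherelLike (P : MeasureTheory.Measure (ℕ → ℕ → ℕ)) : Prop :=
  MeasureTheory.IsProbabilityMeasure P ∧ P { t | IsInfYT t } = 1 ∧
  ∀ (μ : YoungDiagram) (s : SYT μ),
    P (cylEvent μ s) = ENNReal.ofReal ((fSYT μ : ℝ) / (Nat.factorial μ.card))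

noncomputable def qpos (t : ℕ → ℕ → ℕ) (n : ℕ) : ℕ × ℕ :=
  jdtPathF t (sSup { k | t (jdtPathF t k).1 (jdtPathF t k).2 ≤ n })

set_option linter.unusedSectionVars false
set_option linter.unusedVariables false

namespace QP

variable {μ : YoungDiagram}

lemma _root_.SYT.entry_eq_zero (s : SYT μ) {i j : ℕ} (h : (i, j) ∉ μ) : s.entry i j = 0 := by
  by_contra h'
  exact h ((s.mem_iff i j).mpr (Nat.one_le_iff_ne_zero.mpr h'))

lemma _root_.SYT.one_le (s : SYT μ) {i j : ℕ} (h : (i, j) ∈ μ) : 1 ≤ s.entry i j :=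
  (s.mem_iff i j).mp h

lemma _root_.SYT.ext' {s1 s2 : SYT μ} (h : s1.entry = s2.entry) : s1 = s2 := by
  cases s1; cases s2; simp_all

/-- every value in `[1, μ.card]` is attained -/
lemma _root_.SYT.exists_entry_eq (s : SYT μ) {m : ℕ} (h1 : 1 ≤ m) (h2 : m ≤ μ.card) :
    ∃ p : ℕ × ℕ, p ∈ μ ∧ s.entry p.1 p.2 = m := by
  classical
  have hinj : Set.InjOn (fun p : ℕ × ℕ => s.entry p.1 p.2) μ.cells := by
    intro p hp q hq h
    exact s.injOn p.1 p.2 q.1 q.2 (by simpa using hp) (by simpa using hq) h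
  have hcard : (μ.cells.image (fun p : ℕ × ℕ => s.entry p.1 p.2)).card = μ.card :=
    Finset.card_image_of_injOn hinj
  have hsub : μ.cells.image (fun p : ℕ × ℕ => s.entry p.1 p.2) ⊆ Finset.Icc 1 μ.card := by
    intro x hx
    simp only [Finset.mem_image] at hx
    obtain ⟨p, hp, rfl⟩ := hx
    exact Finset.mem_Icc.mpr ⟨s.one_le (by simpa using hp), s.le_card p.1 p.2⟩
  have heq : μ.cells.image (fun p : ℕ × ℕ => s.entry p.1 p.2) = Finset.Icc 1 μ.card := by
    apply Finset.eq_of_subset_of_card_le hsub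
    rw [hcard, Nat.card_Icc]
    omega
  have : m ∈ μ.cells.image (fun p : ℕ × ℕ => s.entry p.1 p.2) := by
    rw [heq]; exact Finset.mem_Icc.mpr ⟨h1, h2⟩
  simp only [Finset.mem_image] at this
  obtain ⟨p, hp, hpe⟩ := this
  exact ⟨p, by simpa using hp, hpe⟩

lemma _root_.YoungDiagram.origin_mem (hn : 1 ≤ μ.card) : (0, 0) ∈ μ := by
  obtain ⟨x, hx⟩ := Finset.card_pos.mp hn
  exact μ.up_left_mem (Nat.zero_le _) (Nat.zero_le _) (by simpa using hx)

lemma _root_.SYT.entry_origin (s : SYT μ) (hn : 1 ≤ μ.card) : s.entry 0 0 = 1 := by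
  obtain ⟨⟨i, j⟩, hp, hpe⟩ := s.exists_entry_eq le_rfl hn
  dsimp only at hp hpe
  rcases Nat.eq_zero_or_pos i with rfl | hi
  · rcases Nat.eq_zero_or_pos j with rfl | hj
    · exact hpe
    · obtain ⟨j', rfl⟩ : ∃ j', j = j' + 1 := ⟨j - 1, by omega⟩
      have h1 := s.row_lt 0 j' hp
      have h2 := s.one_le (μ.up_left_mem le_rfl (Nat.le_succ j') hp)
      omega
  · obtain ⟨i', rfl⟩ : ∃ i', i = i' + 1 := ⟨i - 1, by omega⟩
    have h1 := s.col_lt i' j hp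
    have h2 := s.one_le (μ.up_left_mem (Nat.le_succ i') le_rfl hp)
    omega

lemma _root_.SYT.entry_eq_one_iff (s : SYT μ) (hn : 1 ≤ μ.card) {i j : ℕ} (h : (i, j) ∈ μ) :
    s.entry i j = 1 ↔ (i, j) = (0, 0) := by
  constructor
  · intro h1
    exact s.injOn i j 0 0 h (YoungDiagram.origin_mem hn)
      (by rw [h1, s.entry_origin hn])
  · rintro h; rw [Prod.ext_iff] at h; obtain ⟨rfl, rfl⟩ := h; exact s.entry_origin hn

/-! ### path lemmas (generic `t`) -/

lemma jdtStepF_cases (t : ℕ → ℕ → ℕ) (c : ℕ × ℕ) :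
    jdtStepF t c = (c.1 + 1, c.2) ∨ jdtStepF t c = (c.1, c.2 + 1) := by
  unfold jdtStepF; split <;> simp

lemma jdtPathF_succ (t : ℕ → ℕ → ℕ) (k : ℕ) :
    jdtPathF t (k + 1) = jdtStepF t (jdtPathF t k) := by
  simp [jdtPathF, Function.iterate_succ_apply']

lemma jdtPathF_sum (t : ℕ → ℕ → ℕ) (k : ℕ) :
    (jdtPathF t k).1 + (jdtPathF t k).2 = k := by
  induction k with
  | zero => rfl
  | succ k ih =>
    rw [jdtPathF_succ]
    rcases jdtStepF_cases t (jdtPathF t k) with h | h <;> rw [h] <;> simp <;> omega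

lemma jdtPathF_eq_iff (t : ℕ → ℕ → ℕ) (x : ℕ × ℕ) :
    (∃ k, jdtPathF t k = x) ↔ jdtPathF t (x.1 + x.2) = x := by
  constructor
  · rintro ⟨k, rfl⟩; rw [jdtPathF_sum]
  · intro h; exact ⟨_, h⟩

/-- stepping from a cell outside the diagram stays outside -/
lemma jdtStepF_not_mem (t : ℕ → ℕ → ℕ) {c : ℕ × ℕ} (h : c ∉ μ) : jdtStepF t c ∉ μ := by
  intro hmem
  rcases jdtStepF_cases t c with he | he <;> rw [he] at hmem
  · exact h (μ.up_left_mem (Nat.le_succ _) le_rfl hmem)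
  · exact h (μ.up_left_mem le_rfl (Nat.le_succ _) hmem)

lemma jdtPathF_mem_of_le (t : ℕ → ℕ → ℕ) {j k : ℕ} (hjk : j ≤ k)
    (h : jdtPathF t k ∈ μ) : jdtPathF t j ∈ μ := by
  induction k with
  | zero => rw [Nat.le_zero.mp hjk]; exact h
  | succ k ih =>
    rcases Nat.lt_or_ge j (k + 1) with hj | hj
    · refine ih (by omega) ?_
      by_contra hk
      exact jdtStepF_not_mem t hk (by rwa [← jdtPathF_succ])
    · rw [Nat.le_antisymm hjk hj]; exact h

end QP

namespace QP

variable {μ : YoungDiagram}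

/-- entries increase along a step landing in the diagram -/
lemma entry_lt_step (s : SYT μ) (c : ℕ × ℕ) (h : jdtStepF s.entry c ∈ μ) :
    s.entry c.1 c.2 < s.entry (jdtStepF s.entry c).1 (jdtStepF s.entry c).2 := by
  rcases jdtStepF_cases s.entry c with he | he <;> rw [he] <;> rw [he] at h
  · exact s.col_lt c.1 c.2 h
  · exact s.row_lt c.1 c.2 h

lemma entry_path_ge (s : SYT μ) {k : ℕ} (h : jdtPathF s.entry k ∈ μ) :
    k + 1 ≤ s.entry (jdtPathF s.entry k).1 (jdtPathF s.entry k).2 := by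
  induction k with
  | zero => exact s.one_le (by simpa [jdtPathF] using h)
  | succ k ih =>
    have hk : jdtPathF s.entry k ∈ μ := jdtPathF_mem_of_le _ (Nat.le_succ k) h
    have h1 := ih hk
    have h2 := entry_lt_step s (jdtPathF s.entry k) (by rwa [← jdtPathF_succ])
    rw [jdtPathF_succ]
    omega

lemma path_mem_bdd (s : SYT μ) : ∀ k ∈ {k | jdtPathF s.entry k ∈ μ}, k ≤ μ.card := by
  intro k hk
  have h1 := entry_path_ge s hk
  have h2 := s.le_card (jdtPathF s.entry k).1 (jdtPathF s.entry k).2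
  omega

/-- The length of the in-diagram part of the jdt path. -/
noncomputable def KS (s : SYT μ) : ℕ := sSup {k | jdtPathF s.entry k ∈ μ}

/-- The endpoint of the jdt sliding path. -/
noncomputable def qS (s : SYT μ) : ℕ × ℕ := jdtPathF s.entry (KS s)

variable (hn : 1 ≤ μ.card)
include hn

lemma KS_mem (s : SYT μ) : jdtPathF s.entry (KS s) ∈ μ := by
  have h0 : (0 : ℕ) ∈ {k | jdtPathF s.entry k ∈ μ} := by
    simpa [jdtPathF] using YoungDiagram.origin_mem hn
  exact Nat.sSup_mem ⟨0, h0⟩ ⟨μ.card, path_mem_bdd s⟩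

lemma path_mem_iff_le_KS (s : SYT μ) {k : ℕ} : jdtPathF s.entry k ∈ μ ↔ k ≤ KS s := by
  constructor
  · intro h; exact le_csSup ⟨μ.card, path_mem_bdd s⟩ h
  · intro h; exact jdtPathF_mem_of_le _ h (KS_mem hn s)

lemma qS_mem (s : SYT μ) : qS s ∈ μ := KS_mem hn s

lemma qS_corner (s : SYT μ) :
    ((qS s).1 + 1, (qS s).2) ∉ μ ∧ ((qS s).1, (qS s).2 + 1) ∉ μ := by
  have hnext : jdtPathF s.entry (KS s + 1) ∉ μ := by
    intro h
    have := (path_mem_iff_le_KS hn s).mp h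
    omega
  rw [jdtPathF_succ] at hnext
  unfold jdtStepF at hnext
  constructor
  · intro hd
    have hd0 : s.entry ((qS s).1 + 1) (qS s).2 ≠ 0 := by
      have := s.one_le hd; omega
    by_cases hr : ((qS s).1, (qS s).2 + 1) ∈ μ
    · -- both neighbours in μ: step goes somewhere in μ, contradiction
      split at hnext
      · exact hnext hd
      · exact hnext hr
    · -- right not in μ, down in μ: condition is true, step = down ∈ μ
      have hr0 : s.entry (qS s).1 ((qS s).2 + 1) = 0 := s.entry_eq_zero hr
      rw [if_pos ⟨hd0, Or.inl hr0⟩] at hnext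
      exact hnext hd
  · intro hr
    split at hnext
    · next hcond =>
      have : ((qS s).1 + 1, (qS s).2) ∈ μ := by
        rcases Nat.eq_zero_or_pos (s.entry ((qS s).1 + 1) (qS s).2) with h0 | h0
        · exact absurd h0 hcond.1
        · exact (s.mem_iff _ _).mpr h0
      exact hnext this
    · exact hnext hr

/-- the step from a path cell strictly inside the path stays in μ -/
lemma path_next_mem (s : SYT μ) {k : ℕ} (h : k < KS s) :
    jdtPathF s.entry (k + 1) ∈ μ := (path_mem_iff_le_KS hn s).mpr h

end QP

namespace QP

variable {μ : YoungDiagram}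

lemma jdtF_path (t : ℕ → ℕ → ℕ) (k : ℕ) :
    jdtF t (jdtPathF t k).1 (jdtPathF t k).2
      = t (jdtPathF t (k + 1)).1 (jdtPathF t (k + 1)).2 - 1 := by
  unfold jdtF
  rw [if_pos ⟨k, by simp⟩, jdtPathF_succ]

lemma jdtF_off (t : ℕ → ℕ → ℕ) {i j : ℕ} (h : jdtPathF t (i + j) ≠ (i, j)) :
    jdtF t i j = t i j - 1 := by
  unfold jdtF
  rw [if_neg]
  rintro ⟨k, hk⟩
  have hs := jdtPathF_sum t k
  rw [hk] at hs
  dsimp only at hs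
  exact h (hs ▸ hk)

lemma path_on (t : ℕ → ℕ → ℕ) (k : ℕ) :
    jdtPathF t ((jdtPathF t k).1 + (jdtPathF t k).2) = jdtPathF t k := by
  rw [jdtPathF_sum]

lemma jdtF_le_card (s : SYT μ) (i j : ℕ) : jdtF s.entry i j ≤ μ.card := by
  unfold jdtF
  split
  · have := s.le_card (jdtStepF s.entry (i, j)).1 (jdtStepF s.entry (i, j)).2; omega
  · have := s.le_card i j; omega

lemma step_eq_down {t : ℕ → ℕ → ℕ} {c : ℕ × ℕ} (h : jdtStepF t c = (c.1 + 1, c.2)) :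
    t (c.1 + 1) c.2 ≠ 0 ∧ (t c.1 (c.2 + 1) = 0 ∨ t (c.1 + 1) c.2 < t c.1 (c.2 + 1)) := by
  unfold jdtStepF at h
  split at h
  · assumption
  · exfalso; rw [Prod.ext_iff] at h; omega

lemma step_eq_right {t : ℕ → ℕ → ℕ} {c : ℕ × ℕ} (h : jdtStepF t c = (c.1, c.2 + 1)) :
    ¬(t (c.1 + 1) c.2 ≠ 0 ∧ (t c.1 (c.2 + 1) = 0 ∨ t (c.1 + 1) c.2 < t c.1 (c.2 + 1))) := by
  unfold jdtStepF at h
  split at h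
  · exfalso; rw [Prod.ext_iff] at h; omega
  · assumption

lemma jdtF_zero_of_not_mem (s : SYT μ) {i j : ℕ} (h : (i, j) ∉ μ) : jdtF s.entry i j = 0 := by
  by_cases hon : jdtPathF s.entry (i + j) = (i, j)
  · have := jdtF_path s.entry (i + j)
    rw [hon] at this
    rw [this]
    have hout : jdtPathF s.entry (i + j + 1) ∉ μ := by
      rw [jdtPathF_succ, hon]; exact jdtStepF_not_mem _ h
    rw [s.entry_eq_zero (by simpa using hout)]
  · rw [jdtF_off _ hon, s.entry_eq_zero h]

/-- shift along the path -/
noncomputable def shiftC (s : SYT μ) (x : ℕ × ℕ) : ℕ × ℕ :=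
  if jdtPathF s.entry (x.1 + x.2) = x then jdtPathF s.entry (x.1 + x.2 + 1) else x

variable (hn : 1 ≤ μ.card)
include hn

lemma lt_KS_of_ne (s : SYT μ) {x : ℕ × ℕ} (hx : x ∈ μ) (hq : x ≠ qS s)
    (hon : jdtPathF s.entry (x.1 + x.2) = x) : x.1 + x.2 < KS s := by
  have hle : x.1 + x.2 ≤ KS s := (path_mem_iff_le_KS hn s).mp (by rwa [hon])
  rcases Nat.lt_or_ge (x.1 + x.2) (KS s) with h | h
  · exact h
  · exfalso
    have : x.1 + x.2 = KS s := by omega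
    exact hq (by rw [← hon, this]; rfl)

lemma shiftC_spec (s : SYT μ) {x : ℕ × ℕ} (hx : x ∈ μ) (hq : x ≠ qS s) :
    shiftC s x ∈ μ ∧ jdtF s.entry x.1 x.2 = s.entry (shiftC s x).1 (shiftC s x).2 - 1 ∧
      2 ≤ s.entry (shiftC s x).1 (shiftC s x).2 := by
  unfold shiftC
  by_cases hon : jdtPathF s.entry (x.1 + x.2) = x
  · rw [if_pos hon]
    have hlt := lt_KS_of_ne hn s hx hq hon
    have hmem : jdtPathF s.entry (x.1 + x.2 + 1) ∈ μ := path_next_mem hn s hlt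
    refine ⟨hmem, ?_, ?_⟩
    · have := jdtF_path s.entry (x.1 + x.2)
      rw [hon] at this
      exact this
    · have := entry_path_ge s hmem
      omega
  · rw [if_neg hon]
    have h1 : jdtF s.entry x.1 x.2 = s.entry x.1 x.2 - 1 := jdtF_off _ hon
    refine ⟨hx, h1, ?_⟩
    have h2 : 1 ≤ s.entry x.1 x.2 := s.one_le (by rwa [Prod.mk.eta])
    rcases Nat.lt_or_ge (s.entry x.1 x.2) 2 with h | h
    · exfalso
      have : s.entry x.1 x.2 = 1 := by omega
      have := (s.entry_eq_one_iff hn (by rwa [Prod.mk.eta])).mp this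
      apply hon
      have hx00 : x = (0, 0) := by rw [← Prod.mk.eta (p := x), this]
      rw [hx00]; rfl
    · exact h

lemma shiftC_inj (s : SYT μ) {x y : ℕ × ℕ} (hx : x ∈ μ) (hqx : x ≠ qS s)
    (hy : y ∈ μ) (hqy : y ≠ qS s) (h : shiftC s x = shiftC s y) : x = y := by
  unfold shiftC at h
  by_cases hox : jdtPathF s.entry (x.1 + x.2) = x <;>
    by_cases hoy : jdtPathF s.entry (y.1 + y.2) = y
  · rw [if_pos hox, if_pos hoy] at h
    have := jdtPathF_sum s.entry (x.1 + x.2 + 1)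
    rw [h] at this
    have h2 := jdtPathF_sum s.entry (y.1 + y.2 + 1)
    rw [← hox, ← hoy]
    have : x.1 + x.2 = y.1 + y.2 := by omega
    rw [this]
  · rw [if_pos hox, if_neg hoy] at h
    exact absurd (by rw [← h]; exact path_on s.entry _) hoy
  · rw [if_neg hox, if_pos hoy] at h
    exact absurd (by rw [h]; exact path_on s.entry _) hox
  · rwa [if_neg hox, if_neg hoy] at h

end QP

namespace QP

variable {μ : YoungDiagram}

variable (hn : 1 ≤ μ.card)
include hn

lemma on_path_chain (s : SYT μ) {x : ℕ × ℕ} (hx : x ∈ μ) (hq : x ≠ qS s)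
    (hon : jdtPathF s.entry (x.1 + x.2) = x) :
    jdtPathF s.entry (x.1 + x.2 + 1) ∈ μ ∧
      jdtF s.entry x.1 x.2
        = s.entry (jdtPathF s.entry (x.1 + x.2 + 1)).1 (jdtPathF s.entry (x.1 + x.2 + 1)).2 - 1 ∧
      s.entry x.1 x.2
        < s.entry (jdtPathF s.entry (x.1 + x.2 + 1)).1 (jdtPathF s.entry (x.1 + x.2 + 1)).2 := by
  have hk := lt_KS_of_ne hn s hx hq hon
  have hmem := path_next_mem hn s hk
  refine ⟨hmem, ?_, ?_⟩
  · have h2 := jdtF_path s.entry (x.1 + x.2)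
    rw [hon] at h2
    exact h2
  · have h3 := entry_lt_step s (jdtPathF s.entry (x.1 + x.2))
      (by rw [← jdtPathF_succ]; exact hmem)
    rw [hon] at h3
    rw [jdtPathF_succ, hon]
    exact h3

lemma jdtF_row (s : SYT μ) {i j : ℕ} (hx' : (i, j + 1) ∈ μ)
    (hqx : (i, j) ≠ qS s) (hqx' : (i, j + 1) ≠ qS s) :
    jdtF s.entry i j < jdtF s.entry i (j + 1) := by
  have hx : (i, j) ∈ μ := μ.up_left_mem le_rfl (Nat.le_succ j) hx'
  have ht' : 1 ≤ s.entry i (j + 1) := s.one_le hx'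
  by_cases hon : jdtPathF s.entry (i + j) = (i, j)
  · obtain ⟨hmem, hux, _⟩ := on_path_chain hn s hx hqx hon
    dsimp only at hmem hux
    have hstep : jdtPathF s.entry (i + j + 1) = jdtStepF s.entry (i, j) := by
      rw [jdtPathF_succ, hon]
    rcases jdtStepF_cases s.entry (i, j) with hd | hr
    · -- path goes down to (i+1, j); (i, j+1) is off the path
      dsimp only at hd
      obtain ⟨hne0, hor⟩ := step_eq_down (c := (i, j)) hd
      dsimp only at hne0 hor
      have hlt : s.entry (i + 1) j < s.entry i (j + 1) := by
        rcases hor with h | h <;> omega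
      have hoff : jdtPathF s.entry (i + (j + 1)) ≠ (i, j + 1) := by
        rw [show i + (j + 1) = i + j + 1 from rfl, hstep, hd]
        intro hcontra
        rw [Prod.ext_iff] at hcontra
        dsimp only at hcontra
        omega
      have hux' : jdtF s.entry i (j + 1) = s.entry i (j + 1) - 1 := jdtF_off _ hoff
      rw [hux, hstep, hd, hux']
      dsimp only
      omega
    · -- path goes right to (i, j+1); chain again at (i, j+1)
      dsimp only at hr
      have hon' : jdtPathF s.entry ((i, j + 1).1 + (i, j + 1).2) = (i, j + 1) := by
        dsimp only
        rw [show i + (j + 1) = i + j + 1 from rfl, hstep, hr]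
      obtain ⟨hmem2, hux', hlt2⟩ := on_path_chain hn s hx' hqx' hon'
      dsimp only at hmem2 hux' hlt2
      rw [show i + (j + 1) = i + j + 1 from rfl] at hmem2 hux' hlt2
      rw [hux, hstep, hr, hux']
      dsimp only
      omega
  · have hux : jdtF s.entry i j = s.entry i j - 1 := jdtF_off _ hon
    have h1 : s.entry i j < s.entry i (j + 1) := s.row_lt i j hx'
    have h0 : 1 ≤ s.entry i j := s.one_le hx
    by_cases hon' : jdtPathF s.entry (i + (j + 1)) = (i, j + 1)
    · obtain ⟨hmem2, hux', hlt2⟩ := on_path_chain hn s hx' hqx' hon'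
      dsimp only at hmem2 hux' hlt2
      rw [hux, hux']
      omega
    · rw [hux, jdtF_off _ hon']
      omega

lemma jdtF_col (s : SYT μ) {i j : ℕ} (hx' : (i + 1, j) ∈ μ)
    (hqx : (i, j) ≠ qS s) (hqx' : (i + 1, j) ≠ qS s) :
    jdtF s.entry i j < jdtF s.entry (i + 1) j := by
  have hx : (i, j) ∈ μ := μ.up_left_mem (Nat.le_succ i) le_rfl hx'
  have ht' : 1 ≤ s.entry (i + 1) j := s.one_le hx'
  have hsum : (i + 1) + j = i + j + 1 := by omega
  by_cases hon : jdtPathF s.entry (i + j) = (i, j)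
  · obtain ⟨hmem, hux, _⟩ := on_path_chain hn s hx hqx hon
    dsimp only at hmem hux
    have hstep : jdtPathF s.entry (i + j + 1) = jdtStepF s.entry (i, j) := by
      rw [jdtPathF_succ, hon]
    rcases jdtStepF_cases s.entry (i, j) with hd | hr
    · -- path goes down to (i+1, j); chain again at (i+1, j)
      dsimp only at hd
      have hon' : jdtPathF s.entry ((i + 1, j).1 + (i + 1, j).2) = (i + 1, j) := by
        dsimp only
        rw [hsum, hstep, hd]
      obtain ⟨hmem2, hux', hlt2⟩ := on_path_chain hn s hx' hqx' hon'
      dsimp only at hmem2 hux' hlt2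
      rw [hsum] at hmem2 hux' hlt2
      rw [hux, hstep, hd, hux']
      dsimp only
      omega
    · -- path goes right to (i, j+1); (i+1, j) is off the path
      dsimp only at hr
      have hcond := step_eq_right (c := (i, j)) hr
      dsimp only at hcond
      push_neg at hcond
      obtain ⟨hr0, hle⟩ := hcond (by omega)
      have hrmem : (i, j + 1) ∈ μ := (s.mem_iff i (j + 1)).mpr (by omega)
      have hne : s.entry i (j + 1) ≠ s.entry (i + 1) j := by
        intro heq
        have h5 := s.injOn i (j + 1) (i + 1) j hrmem hx' heq
        rw [Prod.ext_iff] at h5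
        dsimp only at h5
        omega
      have hoff : jdtPathF s.entry ((i + 1) + j) ≠ (i + 1, j) := by
        rw [hsum, hstep, hr]
        intro hcontra
        rw [Prod.ext_iff] at hcontra
        dsimp only at hcontra
        omega
      have hux' : jdtF s.entry (i + 1) j = s.entry (i + 1) j - 1 := jdtF_off _ hoff
      rw [hux, hstep, hr, hux']
      dsimp only
      omega
  · have hux : jdtF s.entry i j = s.entry i j - 1 := jdtF_off _ hon
    have h1 : s.entry i j < s.entry (i + 1) j := s.col_lt i j hx'
    have h0 : 1 ≤ s.entry i j := s.one_le hx
    by_cases hon' : jdtPathF s.entry ((i + 1) + j) = (i + 1, j)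
    · obtain ⟨hmem2, hux', hlt2⟩ := on_path_chain hn s hx' hqx' hon'
      dsimp only at hmem2 hux' hlt2
      rw [hsum] at hmem2 hux' hlt2
      rw [hux, hux']
      omega
    · rw [hux, jdtF_off _ hon']
      omega

end QP

namespace QP

variable {μ : YoungDiagram}

/-- The promotion of a standard Young tableau: apply jeu de taquin and put `μ.card`
in the vacated corner. -/
noncomputable def promS (s : SYT μ) (hn : 1 ≤ μ.card) : SYT μ where
  entry := fun i j => if (i, j) = qS s then μ.card else jdtF s.entry i j
  mem_iff := by
    intro i j
    by_cases hq : (i, j) = qS s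
    · rw [if_pos hq]
      constructor
      · intro _; exact hn
      · intro _; rw [hq]; exact qS_mem hn s
    · rw [if_neg hq]
      constructor
      · intro hmem
        obtain ⟨_, h2, h3⟩ := shiftC_spec hn s (x := (i, j)) hmem hq
        dsimp only at h2
        omega
      · intro h1
        by_contra hmem
        rw [jdtF_zero_of_not_mem s hmem] at h1
        omega
  le_card := by
    intro i j
    by_cases hq : (i, j) = qS s
    · rw [if_pos hq]
    · rw [if_neg hq]; exact jdtF_le_card s i j
  injOn := by
    intro i j i' j' hmem hmem' heq
    by_cases hq : (i, j) = qS s <;> by_cases hq' : (i', j') = qS s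
    · rw [hq, hq']
    · rw [if_pos hq, if_neg hq'] at heq
      obtain ⟨_, h2, h3⟩ := shiftC_spec hn s (x := (i', j')) hmem' hq'
      dsimp only at h2
      have h4 := s.le_card (shiftC s (i', j')).1 (shiftC s (i', j')).2
      omega
    · rw [if_neg hq, if_pos hq'] at heq
      obtain ⟨_, h2, h3⟩ := shiftC_spec hn s (x := (i, j)) hmem hq
      dsimp only at h2
      have h4 := s.le_card (shiftC s (i, j)).1 (shiftC s (i, j)).2
      omega
    · rw [if_neg hq, if_neg hq'] at heq
      obtain ⟨hm1, h2, h3⟩ := shiftC_spec hn s (x := (i, j)) hmem hq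
      obtain ⟨hm1', h2', h3'⟩ := shiftC_spec hn s (x := (i', j')) hmem' hq'
      dsimp only at h2 h2'
      have h5 : s.entry (shiftC s (i, j)).1 (shiftC s (i, j)).2
          = s.entry (shiftC s (i', j')).1 (shiftC s (i', j')).2 := by omega
      have h6 := s.injOn _ _ _ _ (by rwa [Prod.mk.eta]) (by rwa [Prod.mk.eta]) h5
      rw [Prod.mk.eta, Prod.mk.eta] at h6
      exact shiftC_inj hn s hmem hq hmem' hq' h6
  row_lt := by
    intro i j hx'
    by_cases hq' : (i, j + 1) = qS s
    · rw [if_pos hq']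
      have hq : (i, j) ≠ qS s := by
        intro h; rw [← h] at hq'; rw [Prod.ext_iff] at hq'; dsimp only at hq'; omega
      rw [if_neg hq]
      have hmem : (i, j) ∈ μ := μ.up_left_mem le_rfl (Nat.le_succ j) hx'
      obtain ⟨_, h2, h3⟩ := shiftC_spec hn s (x := (i, j)) hmem hq
      dsimp only at h2
      have h4 := s.le_card (shiftC s (i, j)).1 (shiftC s (i, j)).2
      omega
    · have hq : (i, j) ≠ qS s := by
        intro h
        have := (qS_corner hn s).2
        rw [← h] at this
        exact this hx'
      rw [if_neg hq, if_neg hq']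
      exact jdtF_row hn s hx' hq hq'
  col_lt := by
    intro i j hx'
    by_cases hq' : (i + 1, j) = qS s
    · rw [if_pos hq']
      have hq : (i, j) ≠ qS s := by
        intro h; rw [← h] at hq'; rw [Prod.ext_iff] at hq'; dsimp only at hq'; omega
      rw [if_neg hq]
      have hmem : (i, j) ∈ μ := μ.up_left_mem (Nat.le_succ i) le_rfl hx'
      obtain ⟨_, h2, h3⟩ := shiftC_spec hn s (x := (i, j)) hmem hq
      dsimp only at h2
      have h4 := s.le_card (shiftC s (i, j)).1 (shiftC s (i, j)).2
      omega
    · have hq : (i, j) ≠ qS s := by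
        intro h
        have := (qS_corner hn s).1
        rw [← h] at this
        exact this hx'
      rw [if_neg hq, if_neg hq']
      exact jdtF_col hn s hx' hq hq'

lemma promS_entry_qS (s : SYT μ) (hn : 1 ≤ μ.card) :
    (promS s hn).entry (qS s).1 (qS s).2 = μ.card := by
  show (if ((qS s).1, (qS s).2) = qS s then μ.card else _) = μ.card
  rw [if_pos (Prod.mk.eta)]

end QP

namespace QP

variable {μ : YoungDiagram}

lemma half_cmp (s1 s2 : SYT μ) (hu : ∀ i j, jdtF s1.entry i j = jdtF s2.entry i j)
    {k : ℕ} {y : ℕ × ℕ} (hy : y ∈ μ) (h1y : jdtPathF s1.entry (k + 1) = y)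
    (hx1 : jdtPathF s1.entry k ∈ μ) (hoff : jdtPathF s2.entry k ≠ jdtPathF s1.entry k) :
    s1.entry y.1 y.2 < s2.entry y.1 y.2 := by
  set x1 := jdtPathF s1.entry k with hx1def
  have hs : x1.1 + x1.2 = k := jdtPathF_sum s1.entry k
  have ha : jdtF s1.entry x1.1 x1.2 = s1.entry y.1 y.2 - 1 := by
    have := jdtF_path s1.entry k
    rw [h1y] at this
    exact this
  have hb : jdtF s2.entry x1.1 x1.2 = s2.entry x1.1 x1.2 - 1 := by
    refine jdtF_off _ ?_
    rw [hs, Prod.mk.eta]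
    exact hoff
  have hc : s2.entry x1.1 x1.2 < s2.entry y.1 y.2 := by
    rw [jdtPathF_succ, ← hx1def] at h1y
    rcases jdtStepF_cases s1.entry x1 with hstep | hstep <;> rw [hstep] at h1y
    · rw [← h1y]
      exact s2.col_lt x1.1 x1.2 (by rw [h1y]; exact hy)
    · rw [← h1y]
      exact s2.row_lt x1.1 x1.2 (by rw [h1y]; exact hy)
  have hd : 1 ≤ s2.entry x1.1 x1.2 := s2.one_le (by rw [Prod.mk.eta]; exact hx1)
  have he : 1 ≤ s1.entry y.1 y.2 := s1.one_le (by rw [Prod.mk.eta]; exact hy)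
  have hf := hu x1.1 x1.2
  omega

lemma prom_path_eq (hn : 1 ≤ μ.card) {s1 s2 : SYT μ} {c : ℕ × ℕ}
    (h1 : qS s1 = c) (h2 : qS s2 = c)
    (hu : ∀ i j, jdtF s1.entry i j = jdtF s2.entry i j) :
    ∀ k, k ≤ c.1 + c.2 → jdtPathF s1.entry k = jdtPathF s2.entry k := by
  have hK1 : KS s1 = c.1 + c.2 := by
    have := jdtPathF_sum s1.entry (KS s1)
    rw [show jdtPathF s1.entry (KS s1) = c from h1] at this
    omega
  have hK2 : KS s2 = c.1 + c.2 := by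
    have := jdtPathF_sum s2.entry (KS s2)
    rw [show jdtPathF s2.entry (KS s2) = c from h2] at this
    omega
  set K := c.1 + c.2 with hKdef
  have main : ∀ d, jdtPathF s1.entry (K - d) = jdtPathF s2.entry (K - d) := by
    intro d
    induction d with
    | zero =>
      have hqq : jdtPathF s1.entry (KS s1) = jdtPathF s2.entry (KS s2) := by
        show qS s1 = qS s2
        rw [h1, h2]
      rw [hK1, hK2] at hqq
      simpa using hqq
    | succ d ih =>
      rcases Nat.lt_or_ge d K with hdK | hdK
      · set k := K - (d + 1) with hkdef
        have hk1 : k + 1 = K - d := by omega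
        have hy1 : jdtPathF s1.entry (k + 1) = jdtPathF s2.entry (k + 1) := by
          rw [hk1]; exact ih
        by_contra hne
        have hky : k + 1 ≤ K := by omega
        have hymem : jdtPathF s1.entry (k + 1) ∈ μ :=
          (path_mem_iff_le_KS hn s1).mpr (by omega)
        have hymem2 : jdtPathF s2.entry (k + 1) ∈ μ := by rw [← hy1]; exact hymem
        have hx1mem : jdtPathF s1.entry k ∈ μ := (path_mem_iff_le_KS hn s1).mpr (by omega)
        have hx2mem : jdtPathF s2.entry k ∈ μ := (path_mem_iff_le_KS hn s2).mpr (by omega)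
        have hcmp1 := half_cmp s1 s2 hu hymem rfl hx1mem (fun h => hne h.symm)
        have hcmp2 := half_cmp s2 s1 (fun i j => (hu i j).symm)
          hymem2 rfl hx2mem (fun h => hne h)
        rw [← hy1] at hcmp2
        omega
      · rw [Nat.sub_eq_zero_of_le (by omega)]
        rfl
  intro k hk
  have := main (K - k)
  rwa [Nat.sub_sub_self hk] at this

lemma prom_inj (hn : 1 ≤ μ.card) {s1 s2 : SYT μ} {c : ℕ × ℕ}
    (h1 : qS s1 = c) (h2 : qS s2 = c)
    (hp : (promS s1 hn).entry = (promS s2 hn).entry) : s1 = s2 := by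
  -- first, the jdt transforms agree
  have hu : ∀ i j, jdtF s1.entry i j = jdtF s2.entry i j := by
    intro i j
    have := congrFun (congrFun hp i) j
    show _ = _
    by_cases hq : (i, j) = c
    · -- both are zero there
      have e1 : jdtF s1.entry i j = 0 := by
        have hq1 : (i, j) = qS s1 := by rw [h1]; exact hq
        have := jdtF_path s1.entry (KS s1)
        have hnext : jdtPathF s1.entry (KS s1 + 1) ∉ μ := by
          intro hmem
          have := (path_mem_iff_le_KS hn s1).mp hmem
          omega
        rw [show jdtPathF s1.entry (KS s1) = (i, j) from by rw [hq1]; rfl] at this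
        rw [this, s1.entry_eq_zero (by simpa using hnext)]
      have e2 : jdtF s2.entry i j = 0 := by
        have hq2 : (i, j) = qS s2 := by rw [h2]; exact hq
        have := jdtF_path s2.entry (KS s2)
        have hnext : jdtPathF s2.entry (KS s2 + 1) ∉ μ := by
          intro hmem
          have := (path_mem_iff_le_KS hn s2).mp hmem
          omega
        rw [show jdtPathF s2.entry (KS s2) = (i, j) from by rw [hq2]; rfl] at this
        rw [this, s2.entry_eq_zero (by simpa using hnext)]
      rw [e1, e2]
    · have hq1 : (i, j) ≠ qS s1 := by rw [h1]; exact hq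
      have hq2 : (i, j) ≠ qS s2 := by rw [h2]; exact hq
      simpa [promS, if_neg hq1, if_neg hq2] using this
  have hpath := prom_path_eq hn h1 h2 hu
  have hK1 : KS s1 = c.1 + c.2 := by
    have := jdtPathF_sum s1.entry (KS s1)
    rw [show jdtPathF s1.entry (KS s1) = c from h1] at this
    omega
  -- now conclude entries agree
  apply SYT.ext'
  funext i j
  by_cases hmem : (i, j) ∈ μ
  · by_cases hon : jdtPathF s1.entry (i + j) = (i, j)
    · have hle : i + j ≤ c.1 + c.2 := by
        have := (path_mem_iff_le_KS hn s1).mp (by rw [hon]; exact hmem)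
        omega
      have hon2 : jdtPathF s2.entry (i + j) = (i, j) := by
        rw [← hpath (i + j) hle]; exact hon
      rcases Nat.eq_zero_or_pos (i + j) with h0 | h0
      · have hi : i = 0 := by omega
        have hj : j = 0 := by omega
        subst hi hj
        rw [s1.entry_origin hn, s2.entry_origin hn]
      · obtain ⟨m, hm⟩ : ∃ m, i + j = m + 1 := ⟨i + j - 1, by omega⟩
        have hmle : m ≤ c.1 + c.2 := by omega
        have e1 := jdtF_path s1.entry m
        have e2 := jdtF_path s2.entry m
        rw [show m + 1 = i + j from hm.symm, hon] at e1
        rw [show m + 1 = i + j from hm.symm, hon2] at e2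
        have hpm := hpath m hmle
        have humm := hu (jdtPathF s1.entry m).1 (jdtPathF s1.entry m).2
        rw [e1] at humm
        rw [hpm] at humm
        rw [e2] at humm
        dsimp only at humm
        have g1 : 1 ≤ s1.entry i j := s1.one_le hmem
        have g2 : 1 ≤ s2.entry i j := s2.one_le hmem
        omega
    · have hon2 : jdtPathF s2.entry (i + j) ≠ (i, j) := by
        intro hcon
        have hle : i + j ≤ c.1 + c.2 := by
          have hK2 : KS s2 = c.1 + c.2 := by
            have := jdtPathF_sum s2.entry (KS s2)
            rw [show jdtPathF s2.entry (KS s2) = c from h2] at this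
            omega
          have := (path_mem_iff_le_KS hn s2).mp (by rw [hcon]; exact hmem)
          omega
        exact hon (by rw [hpath (i + j) hle]; exact hcon)
      have e1 := jdtF_off s1.entry hon
      have e2 := jdtF_off s2.entry hon2
      have humm := hu i j
      rw [e1, e2] at humm
      have g1 : 1 ≤ s1.entry i j := s1.one_le hmem
      have g2 : 1 ≤ s2.entry i j := s2.one_le hmem
      omega
  · rw [s1.entry_eq_zero hmem, s2.entry_eq_zero hmem]

end QP

namespace QP

variable {μ : YoungDiagram}

instance : Finite (SYT μ) := by
  let f : SYT μ → (μ.cells → Fin (μ.card + 1)) := fun s p =>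
    ⟨s.entry p.1.1 p.1.2, by have := s.le_card p.1.1 p.1.2; omega⟩
  have hf : Function.Injective f := by
    intro s1 s2 h
    apply SYT.ext'
    funext i j
    by_cases hmem : (i, j) ∈ μ
    · have h2 := congrFun h ⟨(i, j), by simpa using hmem⟩
      simpa [f, Fin.ext_iff] using h2
    · rw [s1.entry_eq_zero hmem, s2.entry_eq_zero hmem]
  exact Finite.of_injective f hf

noncomputable def posN (s : SYT μ) (hn : 1 ≤ μ.card) : ℕ × ℕ :=
  (s.exists_entry_eq hn le_rfl).choose

lemma posN_mem (s : SYT μ) (hn : 1 ≤ μ.card) : posN s hn ∈ μ :=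
  (s.exists_entry_eq hn le_rfl).choose_spec.1

lemma posN_entry (s : SYT μ) (hn : 1 ≤ μ.card) :
    s.entry (posN s hn).1 (posN s hn).2 = μ.card :=
  (s.exists_entry_eq hn le_rfl).choose_spec.2

lemma posN_eq_iff (s : SYT μ) (hn : 1 ≤ μ.card) (c : ℕ × ℕ) :
    posN s hn = c ↔ s.entry c.1 c.2 = μ.card := by
  constructor
  · rintro rfl; exact posN_entry s hn
  · intro h
    have hc : c ∈ μ := by
      rw [← Prod.mk.eta (p := c)]
      exact (s.mem_iff c.1 c.2).mpr (by omega)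
    have := s.injOn (posN s hn).1 (posN s hn).2 c.1 c.2
      (by rw [Prod.mk.eta]; exact posN_mem s hn) (by rw [Prod.mk.eta]; exact hc)
      (by rw [posN_entry s hn, h])
    rwa [Prod.mk.eta, Prod.mk.eta] at this

/-- promotion sends `{qS = c}` into `{posN = c}` injectively -/
lemma card_q_le (hn : 1 ≤ μ.card) (c : ℕ × ℕ) :
    Nat.card {s : SYT μ // qS s = c} ≤ Nat.card {s : SYT μ // posN s hn = c} := by
  have := Fintype.ofFinite (SYT μ)
  let F : {s : SYT μ // qS s = c} → {s : SYT μ // posN s hn = c} := fun s =>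
    ⟨promS s.1 hn, by
      rw [posN_eq_iff]
      have h := promS_entry_qS s.1 hn
      rw [s.2] at h
      exact h⟩
  have hF : Function.Injective F := by
    intro s1 s2 h
    have h2 : (promS s1.1 hn).entry = (promS s2.1 hn).entry := by
      have := congrArg Subtype.val h
      simp only [F] at this
      rw [this]
    exact Subtype.ext (prom_inj hn s1.2 s2.2 h2)
  exact Nat.card_le_card_of_injective F hF

lemma sum_fibers_q (hn : 1 ≤ μ.card) :
    ∑ c ∈ μ.cells, Nat.card {s : SYT μ // qS s = c} = Nat.card (SYT μ) := by
  classical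
  have := Fintype.ofFinite (SYT μ)
  have hmain := Finset.card_eq_sum_card_fiberwise
    (f := fun s : SYT μ => qS s) (t := μ.cells) (s := Finset.univ)
    (fun s _ => by simpa using qS_mem hn s)
  rw [Nat.card_eq_fintype_card,
    show Fintype.card (SYT μ) = (Finset.univ : Finset (SYT μ)).card from rfl, hmain]
  refine Finset.sum_congr rfl fun c _ => ?_
  rw [Nat.card_eq_fintype_card, Fintype.card_subtype]

lemma sum_fibers_pos (hn : 1 ≤ μ.card) :
    ∑ c ∈ μ.cells, Nat.card {s : SYT μ // posN s hn = c} = Nat.card (SYT μ) := by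
  classical
  have := Fintype.ofFinite (SYT μ)
  have hmain := Finset.card_eq_sum_card_fiberwise
    (f := fun s : SYT μ => posN s hn) (t := μ.cells) (s := Finset.univ)
    (fun s _ => by simpa using posN_mem s hn)
  rw [Nat.card_eq_fintype_card,
    show Fintype.card (SYT μ) = (Finset.univ : Finset (SYT μ)).card from rfl, hmain]
  refine Finset.sum_congr rfl fun c _ => ?_
  rw [Nat.card_eq_fintype_card, Fintype.card_subtype]

lemma comb_main (hn : 1 ≤ μ.card) (c : ℕ × ℕ) :
    Nat.card {s : SYT μ // qS s = c} = Nat.card {s : SYT μ // s.entry c.1 c.2 = μ.card} := by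
  have hiff : ∀ s : SYT μ, s.entry c.1 c.2 = μ.card ↔ posN s hn = c := by
    intro s; rw [posN_eq_iff]
  have hcongr : Nat.card {s : SYT μ // s.entry c.1 c.2 = μ.card}
      = Nat.card {s : SYT μ // posN s hn = c} := by
    apply Nat.card_congr
    exact Equiv.subtypeEquivRight hiff
  rw [hcongr]
  by_cases hc : c ∈ μ.cells
  · have hsum : ∑ x ∈ μ.cells, Nat.card {s : SYT μ // qS s = x}
        = ∑ x ∈ μ.cells, Nat.card {s : SYT μ // posN s hn = x} := by
      rw [sum_fibers_q hn, sum_fibers_pos hn]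
    have hle : ∀ x ∈ μ.cells, Nat.card {s : SYT μ // qS s = x}
        ≤ Nat.card {s : SYT μ // posN s hn = x} := fun x _ => card_q_le hn x
    exact ((Finset.sum_eq_sum_iff_of_le hle).mp hsum) c hc
  · have h1 : IsEmpty {s : SYT μ // qS s = c} := by
      constructor; rintro ⟨s, rfl⟩
      exact hc (by simpa using qS_mem hn s)
    have h2 : IsEmpty {s : SYT μ // posN s hn = c} := by
      constructor; rintro ⟨s, rfl⟩
      exact hc (by simpa using posN_mem s hn)
    rw [Nat.card_of_isEmpty, Nat.card_of_isEmpty]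

end QP

namespace QP

variable {t : ℕ → ℕ → ℕ}

lemma infYT_row_mono (ht : IsInfYT t) (i j d : ℕ) : t i j ≤ t i (j + d) := by
  induction d with
  | zero => simp
  | succ d ih =>
    have h := ht.2.2.1 i (j + d)
    have h2 : t i (j + (d + 1)) = t i (j + d + 1) := rfl
    omega

lemma infYT_col_mono (ht : IsInfYT t) (i j d : ℕ) : t i j ≤ t (i + d) j := by
  induction d with
  | zero => simp
  | succ d ih =>
    have h := ht.2.2.2 (i + d) j
    have h2 : t (i + (d + 1)) j = t (i + d + 1) j := rfl
    omega

lemma infYT_mono (ht : IsInfYT t) {i j i' j' : ℕ} (hi : i ≤ i') (hj : j ≤ j') :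
    t i j ≤ t i' j' := by
  have h1 := infYT_row_mono ht i j (j' - j)
  rw [Nat.add_sub_cancel' hj] at h1
  have h2 := infYT_col_mono ht i j' (i' - i)
  rw [Nat.add_sub_cancel' hi] at h2
  omega

lemma infYT_inj (ht : IsInfYT t) {x y : ℕ × ℕ} (h : t x.1 x.2 = t y.1 y.2) : x = y := by
  have hm : 1 ≤ t y.1 y.2 := ht.1 _ _
  obtain ⟨c, _, hcu⟩ := ht.2.1 (t y.1 y.2) hm
  rw [hcu x h, hcu y rfl]

open scoped Classical in
noncomputable def cellOf (t : ℕ → ℕ → ℕ) (m : ℕ) : ℕ × ℕ :=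
  if h : ∃ c : ℕ × ℕ, t c.1 c.2 = m then h.choose else (0, 0)

lemma cellOf_spec (ht : IsInfYT t) {m : ℕ} (hm : 1 ≤ m) :
    t (cellOf t m).1 (cellOf t m).2 = m := by
  obtain ⟨c, hc, _⟩ := ht.2.1 m hm
  have hex : ∃ c : ℕ × ℕ, t c.1 c.2 = m := ⟨c, hc⟩
  rw [cellOf, dif_pos hex]
  exact hex.choose_spec

lemma cellOf_eq (ht : IsInfYT t) {m : ℕ} (hm : 1 ≤ m) {x : ℕ × ℕ}
    (hx : t x.1 x.2 = m) : cellOf t m = x := by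
  apply infYT_inj ht
  rw [cellOf_spec ht hm, hx]

lemma shape_mem_aux (ht : IsInfYT t) (n : ℕ) (x : ℕ × ℕ) :
    x ∈ (Finset.Icc 1 n).image (cellOf t) ↔ t x.1 x.2 ≤ n := by
  constructor
  · intro hx
    obtain ⟨m, hm, rfl⟩ := Finset.mem_image.mp hx
    rw [cellOf_spec ht (Finset.mem_Icc.mp hm).1]
    exact (Finset.mem_Icc.mp hm).2
  · intro hx
    refine Finset.mem_image.mpr ⟨t x.1 x.2, Finset.mem_Icc.mpr ⟨ht.1 _ _, hx⟩, ?_⟩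
    exact cellOf_eq ht (ht.1 _ _) rfl

noncomputable def shapeOf (ht : IsInfYT t) (n : ℕ) : YoungDiagram where
  cells := (Finset.Icc 1 n).image (cellOf t)
  isLowerSet := by
    intro a b hba ha
    simp only [Finset.mem_coe] at ha ⊢
    rw [shape_mem_aux ht n] at ha ⊢
    exact le_trans (infYT_mono ht hba.1 hba.2) ha

lemma mem_shapeOf (ht : IsInfYT t) (n : ℕ) (x : ℕ × ℕ) :
    x ∈ shapeOf ht n ↔ t x.1 x.2 ≤ n := shape_mem_aux ht n x

lemma shapeOf_card (ht : IsInfYT t) (n : ℕ) : (shapeOf ht n).card = n := by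
  show ((Finset.Icc 1 n).image (cellOf t)).card = n
  rw [Finset.card_image_of_injOn, Nat.card_Icc]
  · omega
  · intro m hm m' hm' h
    have h1 := cellOf_spec ht (Finset.mem_Icc.mp hm).1
    have h2 := cellOf_spec ht (Finset.mem_Icc.mp hm').1
    rw [h] at h1
    rw [h2] at h1
    exact h1.symm

noncomputable def sytOf (ht : IsInfYT t) (n : ℕ) : SYT (shapeOf ht n) where
  entry := fun i j => if t i j ≤ n then t i j else 0
  mem_iff := by
    intro i j
    rw [mem_shapeOf ht n]
    dsimp only
    split
    · exact ⟨fun _ => ht.1 i j, fun _ => by assumption⟩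
    · exact ⟨fun h => absurd h (by assumption), fun h => by omega⟩
  le_card := by
    intro i j
    rw [shapeOf_card ht n]
    split <;> omega
  injOn := by
    intro i j i' j' hmem hmem' heq
    rw [mem_shapeOf ht n] at hmem hmem'
    dsimp only at hmem hmem' heq
    rw [if_pos hmem, if_pos hmem'] at heq
    exact infYT_inj ht (x := (i, j)) (y := (i', j')) heq
  row_lt := by
    intro i j hmem'
    rw [mem_shapeOf ht n] at hmem'
    dsimp only at hmem'
    have h := ht.2.2.1 i j
    rw [if_pos hmem', if_pos (by omega : t i j ≤ n)]
    exact h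
  col_lt := by
    intro i j hmem'
    rw [mem_shapeOf ht n] at hmem'
    dsimp only at hmem'
    have h := ht.2.2.2 i j
    rw [if_pos hmem', if_pos (by omega : t i j ≤ n)]
    exact h

lemma mem_cyl_self (ht : IsInfYT t) (n : ℕ) : t ∈ cylEvent (shapeOf ht n) (sytOf ht n) := by
  intro i j hmem
  rw [mem_shapeOf ht n] at hmem
  dsimp only at hmem
  show t i j = if t i j ≤ n then t i j else 0
  rw [if_pos hmem]

end QP

namespace QP

variable {t : ℕ → ℕ → ℕ} {μ : YoungDiagram} {n : ℕ} {s : SYT μ}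

section
variable (hn : 1 ≤ n) (hcard : μ.card = n) (ht : IsInfYT t) (hcyl : t ∈ cylEvent μ s)
include hcard ht hcyl

lemma cyl_out {x : ℕ × ℕ} (hx : x ∉ μ) : n < t x.1 x.2 := by
  by_contra hle
  push_neg at hle
  have h1 : 1 ≤ t x.1 x.2 := ht.1 _ _
  obtain ⟨p, hp, hpe⟩ := s.exists_entry_eq h1 (by rw [hcard]; exact hle)
  have htp : t p.1 p.2 = t x.1 x.2 := by
    rw [hcyl p.1 p.2 (by rwa [Prod.mk.eta]), hpe]
  have hpx := infYT_inj ht htp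
  rw [hpx] at hp
  exact hx hp

lemma cyl_mem_le {x : ℕ × ℕ} (hx : x ∈ μ) : t x.1 x.2 ≤ n := by
  rw [hcyl x.1 x.2 (by rwa [Prod.mk.eta])]
  rw [← hcard]
  exact s.le_card x.1 x.2

lemma step_agree {x : ℕ × ℕ} (hstep : jdtStepF s.entry x ∈ μ) :
    jdtStepF t x = jdtStepF s.entry x := by
  by_cases hd : (x.1 + 1, x.2) ∈ μ <;> by_cases hr : (x.1, x.2 + 1) ∈ μ
  · unfold jdtStepF
    rw [hcyl _ _ hd, hcyl _ _ hr]
  · -- down in, right out: both step down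
    have hsd : s.entry (x.1 + 1) x.2 ≠ 0 := by have := s.one_le hd; omega
    have hsr : s.entry x.1 (x.2 + 1) = 0 := s.entry_eq_zero hr
    have htd : t (x.1 + 1) x.2 ≤ n := cyl_mem_le hcard ht hcyl hd
    have htd1 : 1 ≤ t (x.1 + 1) x.2 := ht.1 _ _
    have htr : n < t x.1 (x.2 + 1) := cyl_out hcard ht hcyl hr
    unfold jdtStepF
    rw [if_pos ⟨by omega, Or.inr (by omega)⟩, if_pos ⟨hsd, Or.inl hsr⟩]
  · -- down out, right in: both step right
    have hsd : s.entry (x.1 + 1) x.2 = 0 := s.entry_eq_zero hd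
    have htr : t x.1 (x.2 + 1) ≤ n := cyl_mem_le hcard ht hcyl hr
    have htr1 : 1 ≤ t x.1 (x.2 + 1) := ht.1 _ _
    have htd : n < t (x.1 + 1) x.2 := cyl_out hcard ht hcyl hd
    unfold jdtStepF
    rw [if_neg (by rintro ⟨h1, h2 | h2⟩ <;> omega),
      if_neg (by rintro ⟨h1, _⟩; exact h1 hsd)]
  · exfalso
    rcases jdtStepF_cases s.entry x with h | h <;> rw [h] at hstep
    exacts [hd hstep, hr hstep]

lemma path_agree (hμ : 1 ≤ μ.card) :
    ∀ k, k ≤ KS s → jdtPathF t k = jdtPathF s.entry k := by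
  intro k
  induction k with
  | zero => intro _; rfl
  | succ k ih =>
    intro hk
    rw [jdtPathF_succ, jdtPathF_succ, ih (by omega)]
    apply step_agree hcard ht hcyl
    rw [← jdtPathF_succ]
    exact (path_mem_iff_le_KS hμ s).mpr hk

lemma path_t_out (hμ : 1 ≤ μ.card) : ∀ k, KS s < k → jdtPathF t k ∉ μ := by
  have h1 : ∀ m, jdtPathF t (KS s + 1 + m) ∉ μ := by
    intro m
    induction m with
    | zero =>
      show jdtPathF t (KS s + 1) ∉ μ
      rw [jdtPathF_succ, path_agree hcard ht hcyl hμ (KS s) le_rfl]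
      have hc := qS_corner hμ s
      have hq : jdtPathF s.entry (KS s) = qS s := rfl
      rw [hq]
      rcases jdtStepF_cases t (qS s) with h | h <;> rw [h]
      exacts [hc.1, hc.2]
    | succ m ihm =>
      rw [show KS s + 1 + (m + 1) = (KS s + 1 + m) + 1 from rfl, jdtPathF_succ]
      exact jdtStepF_not_mem t ihm
  intro k hk
  have := h1 (k - (KS s + 1))
  rwa [show KS s + 1 + (k - (KS s + 1)) = k by omega] at this

lemma qpos_cyl (hμ : 1 ≤ μ.card) : qpos t n = qS s := by
  have hset : {k | t (jdtPathF t k).1 (jdtPathF t k).2 ≤ n} = Set.Iic (KS s) := by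
    ext k
    simp only [Set.mem_setOf_eq, Set.mem_Iic]
    constructor
    · intro h
      by_contra hgt
      push_neg at hgt
      have hout := path_t_out hcard ht hcyl hμ k hgt
      have := cyl_out hcard ht hcyl hout
      omega
    · intro h
      rw [path_agree hcard ht hcyl hμ k h]
      exact cyl_mem_le hcard ht hcyl ((path_mem_iff_le_KS hμ s).mpr h)
  rw [qpos, hset, csSup_Iic, path_agree hcard ht hcyl hμ (KS s) le_rfl]
  rfl

include hn in
lemma entry_cyl (c : ℕ × ℕ) : t c.1 c.2 = n ↔ s.entry c.1 c.2 = n := by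
  by_cases hc : c ∈ μ
  · rw [hcyl c.1 c.2 (by rwa [Prod.mk.eta])]
  · have h1 := cyl_out hcard ht hcyl hc
    have h2 : s.entry c.1 c.2 = 0 := s.entry_eq_zero (by rwa [Prod.mk.eta])
    constructor <;> intro h <;> omega

/-- the shape and tableau are determined by `t` -/
lemma shape_determined : μ = shapeOf ht n := by
  ext x
  rw [YoungDiagram.mem_cells, YoungDiagram.mem_cells, mem_shapeOf ht n]
  constructor
  · intro h; exact cyl_mem_le hcard ht hcyl h
  · intro h
    by_contra hx
    have := cyl_out hcard ht hcyl hx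
    omega

end

end QP

namespace QP

lemma measurable_eval (i j : ℕ) : Measurable fun t : ℕ → ℕ → ℕ => t i j :=
  (measurable_pi_apply j).comp (measurable_pi_apply i)

lemma meas_eq (i j m : ℕ) : MeasurableSet {t : ℕ → ℕ → ℕ | t i j = m} := by
  have h := measurable_eval i j (measurableSet_singleton m)
  exact h

lemma meas_le (i j m : ℕ) : MeasurableSet {t : ℕ → ℕ → ℕ | m ≤ t i j} := by
  rw [show {t : ℕ → ℕ → ℕ | m ≤ t i j} = ⋃ a, ⋃ _h : m ≤ a, {t : ℕ → ℕ → ℕ | t i j = a} by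
    ext t; simp]
  exact MeasurableSet.iUnion fun a => MeasurableSet.iUnion fun _ => meas_eq i j a

lemma meas_lt (i j i' j' : ℕ) : MeasurableSet {t : ℕ → ℕ → ℕ | t i j < t i' j'} := by
  rw [show {t : ℕ → ℕ → ℕ | t i j < t i' j'}
      = ⋃ a, ⋃ b, ⋃ _h : a < b, ({t : ℕ → ℕ → ℕ | t i j = a} ∩ {t : ℕ → ℕ → ℕ | t i' j' = b}) by
    ext t
    simp only [Set.mem_iUnion, Set.mem_inter_iff, Set.mem_setOf_eq]
    constructor
    · intro h; exact ⟨t i j, t i' j', h, rfl, rfl⟩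
    · rintro ⟨a, b, h, rfl, rfl⟩; exact h]
  exact MeasurableSet.iUnion fun a => MeasurableSet.iUnion fun b =>
    MeasurableSet.iUnion fun _ => (meas_eq i j a).inter (meas_eq i' j' b)

lemma measurableSet_infYT : MeasurableSet {t : ℕ → ℕ → ℕ | IsInfYT t} := by
  have hA : MeasurableSet {t : ℕ → ℕ → ℕ | ∀ i j, 1 ≤ t i j} := by
    rw [show {t : ℕ → ℕ → ℕ | ∀ i j, 1 ≤ t i j}
        = ⋂ i, ⋂ j, {t : ℕ → ℕ → ℕ | 1 ≤ t i j} by ext t; simp]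
    exact MeasurableSet.iInter fun i => MeasurableSet.iInter fun j => meas_le i j 1
  have hB : MeasurableSet {t : ℕ → ℕ → ℕ | ∀ m, 1 ≤ m → ∃! c : ℕ × ℕ, t c.1 c.2 = m} := by
    rw [show {t : ℕ → ℕ → ℕ | ∀ m, 1 ≤ m → ∃! c : ℕ × ℕ, t c.1 c.2 = m}
        = ⋂ m, ⋂ _h : 1 ≤ m,
            ⋃ c : ℕ × ℕ, ({t : ℕ → ℕ → ℕ | t c.1 c.2 = m}
              ∩ ⋂ y : ℕ × ℕ, {t : ℕ → ℕ → ℕ | t y.1 y.2 = m → y = c}) by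
      ext t
      simp only [Set.mem_setOf_eq, Set.mem_iInter, Set.mem_iUnion, Set.mem_inter_iff,
        ExistsUnique]]
    refine MeasurableSet.iInter fun m => MeasurableSet.iInter fun _ =>
      MeasurableSet.iUnion fun c => (meas_eq c.1 c.2 m).inter
        (MeasurableSet.iInter fun y => ?_)
    by_cases hyc : y = c
    · rw [show {t : ℕ → ℕ → ℕ | t y.1 y.2 = m → y = c} = Set.univ by
        ext t; simp [hyc]]
      exact MeasurableSet.univ
    · rw [show {t : ℕ → ℕ → ℕ | t y.1 y.2 = m → y = c} = {t : ℕ → ℕ → ℕ | t y.1 y.2 = m}ᶜ by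
        ext t; simp [hyc]]
      exact (meas_eq y.1 y.2 m).compl
  have hC : MeasurableSet {t : ℕ → ℕ → ℕ | ∀ i j, t i j < t i (j + 1)} := by
    rw [show {t : ℕ → ℕ → ℕ | ∀ i j, t i j < t i (j + 1)}
        = ⋂ i, ⋂ j, {t : ℕ → ℕ → ℕ | t i j < t i (j + 1)} by ext t; simp]
    exact MeasurableSet.iInter fun i => MeasurableSet.iInter fun j => meas_lt i j i (j + 1)
  have hD : MeasurableSet {t : ℕ → ℕ → ℕ | ∀ i j, t i j < t (i + 1) j} := by
    rw [show {t : ℕ → ℕ → ℕ | ∀ i j, t i j < t (i + 1) j}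
        = ⋂ i, ⋂ j, {t : ℕ → ℕ → ℕ | t i j < t (i + 1) j} by ext t; simp]
    exact MeasurableSet.iInter fun i => MeasurableSet.iInter fun j => meas_lt i j (i + 1) j
  have : {t : ℕ → ℕ → ℕ | IsInfYT t}
      = {t : ℕ → ℕ → ℕ | ∀ i j, 1 ≤ t i j}
        ∩ ({t : ℕ → ℕ → ℕ | ∀ m, 1 ≤ m → ∃! c : ℕ × ℕ, t c.1 c.2 = m}
        ∩ ({t : ℕ → ℕ → ℕ | ∀ i j, t i j < t i (j + 1)}
        ∩ {t : ℕ → ℕ → ℕ | ∀ i j, t i j < t (i + 1) j})) := by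
    ext t
    exact Iff.rfl
  rw [this]
  exact hA.inter (hB.inter (hC.inter hD))

lemma meas_cyl (μ : YoungDiagram) (s : SYT μ) : MeasurableSet (cylEvent μ s) := by
  rw [show cylEvent μ s
      = ⋂ p : ℕ × ℕ, {t : ℕ → ℕ → ℕ | p ∈ μ → t p.1 p.2 = s.entry p.1 p.2} by
    ext t
    simp only [cylEvent, Set.mem_setOf_eq, Set.mem_iInter]
    exact ⟨fun h p hp => h p.1 p.2 (by rwa [Prod.mk.eta]), fun h i j hij => h (i, j) hij⟩]
  refine MeasurableSet.iInter fun p => ?_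
  by_cases hp : p ∈ μ
  · rw [show {t : ℕ → ℕ → ℕ | p ∈ μ → t p.1 p.2 = s.entry p.1 p.2}
        = {t : ℕ → ℕ → ℕ | t p.1 p.2 = s.entry p.1 p.2} by ext t; simp [hp]]
    exact meas_eq p.1 p.2 _
  · rw [show {t : ℕ → ℕ → ℕ | p ∈ μ → t p.1 p.2 = s.entry p.1 p.2} = Set.univ by
      ext t; simp [hp]]
    exact MeasurableSet.univ

instance : Countable YoungDiagram := by
  apply Countable.of_equiv {c : Finset (ℕ × ℕ) // IsLowerSet (c : Set (ℕ × ℕ))}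
  exact ⟨fun c => ⟨c.1, c.2⟩, fun μ => ⟨μ.cells, μ.isLowerSet⟩, fun c => rfl, fun μ => rfl⟩

end QP

namespace QP

lemma pair_eq {t : ℕ → ℕ → ℕ} {n : ℕ} {μ1 μ2 : YoungDiagram} {s1 : SYT μ1} {s2 : SYT μ2}
    (hcard1 : μ1.card = n) (hcard2 : μ2.card = n) (ht : IsInfYT t)
    (h1 : t ∈ cylEvent μ1 s1) (h2 : t ∈ cylEvent μ2 s2) :
    (⟨μ1, s1⟩ : Σ ν : YoungDiagram, SYT ν) = ⟨μ2, s2⟩ := by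
  have hμ : μ1 = μ2 := by
    rw [shape_determined hcard1 ht h1, shape_determined hcard2 ht h2]
  subst hμ
  apply congrArg (Sigma.mk μ1)
  apply SYT.ext'
  funext i j
  by_cases hm : (i, j) ∈ μ1
  · rw [← h1 i j hm, h2 i j hm]
  · rw [s1.entry_eq_zero hm, s2.entry_eq_zero hm]

lemma decomp {n : ℕ} (E : Set (ℕ → ℕ → ℕ)) (Q : (Σ ν : YoungDiagram, SYT ν) → Prop)
    (hE : ∀ (t : ℕ → ℕ → ℕ) (ht : IsInfYT t) (p : Σ ν : YoungDiagram, SYT ν),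
      p.1.card = n → t ∈ cylEvent p.1 p.2 → (t ∈ E ↔ Q p)) :
    E ∩ {t | IsInfYT t}
      = ⋃ p : {p : Σ ν : YoungDiagram, SYT ν // p.1.card = n ∧ Q p},
          (cylEvent p.1.1 p.1.2 ∩ {t | IsInfYT t}) := by
  ext t
  simp only [Set.mem_inter_iff, Set.mem_iUnion, Set.mem_setOf_eq]
  constructor
  · rintro ⟨htE, htI⟩
    refine ⟨⟨⟨shapeOf htI n, sytOf htI n⟩, shapeOf_card htI n, ?_⟩, mem_cyl_self htI n, htI⟩
    exact (hE t htI ⟨shapeOf htI n, sytOf htI n⟩ (shapeOf_card htI n) (mem_cyl_self htI n)).mp htE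
  · rintro ⟨⟨⟨ν, s⟩, hcard, hQ⟩, hcyl, htI⟩
    exact ⟨(hE t htI ⟨ν, s⟩ hcard hcyl).mpr hQ, htI⟩

noncomputable def eFiber (n : ℕ) (c : ℕ × ℕ) (μ : YoungDiagram) (hμ : μ.card = n)
    (hn : 1 ≤ n) : {s : SYT μ // qS s = c} ≃ {s : SYT μ // s.entry c.1 c.2 = n} := by
  have h1 : 1 ≤ μ.card := hμ ▸ hn
  have hcards : Nat.card {s : SYT μ // qS s = c}
      = Nat.card {s : SYT μ // s.entry c.1 c.2 = n} := by
    have h := comb_main h1 c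
    rwa [hμ] at h
  haveI := Fintype.ofFinite {s : SYT μ // qS s = c}
  haveI := Fintype.ofFinite {s : SYT μ // s.entry c.1 c.2 = n}
  rw [Nat.card_eq_fintype_card, Nat.card_eq_fintype_card] at hcards
  exact Fintype.equivOfCardEq hcards

noncomputable def eG (n : ℕ) (hn : 1 ≤ n) (c : ℕ × ℕ) :
    {p : Σ ν : YoungDiagram, SYT ν // p.1.card = n ∧ qS p.2 = c}
      ≃ {p : Σ ν : YoungDiagram, SYT ν // p.1.card = n ∧ p.2.entry c.1 c.2 = n} where
  toFun p := ⟨⟨p.1.1, (eFiber n c p.1.1 p.2.1 hn ⟨p.1.2, p.2.2⟩).1⟩,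
    ⟨p.2.1, (eFiber n c p.1.1 p.2.1 hn ⟨p.1.2, p.2.2⟩).2⟩⟩
  invFun q := ⟨⟨q.1.1, ((eFiber n c q.1.1 q.2.1 hn).symm ⟨q.1.2, q.2.2⟩).1⟩,
    ⟨q.2.1, ((eFiber n c q.1.1 q.2.1 hn).symm ⟨q.1.2, q.2.2⟩).2⟩⟩
  left_inv := by
    rintro ⟨⟨ν, s⟩, hcard, hq⟩
    apply Subtype.ext
    dsimp only
    apply congrArg (Sigma.mk ν)
    have h := Equiv.symm_apply_apply (eFiber n c ν hcard hn) ⟨s, hq⟩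
    exact congrArg Subtype.val h
  right_inv := by
    rintro ⟨⟨ν, s⟩, hcard, hq⟩
    apply Subtype.ext
    dsimp only
    apply congrArg (Sigma.mk ν)
    have h := Equiv.apply_symm_apply (eFiber n c ν hcard hn) ⟨s, hq⟩
    exact congrArg Subtype.val h

theorem qpos_distribution_aux (P : Measure (ℕ → ℕ → ℕ)) (hP : PlancherelLike P)
    (n : ℕ) (hn : 1 ≤ n) (c : ℕ × ℕ) :
    P { t | qpos t n = c } = P { t | t c.1 c.2 = n } := by
  classical
  obtain ⟨hprob, hI, hcylP⟩ := hP
  have hImeas := QP.measurableSet_infYT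
  have hIc : P {t | IsInfYT t}ᶜ = 0 := by
    rw [measure_compl hImeas (measure_ne_top P _), hI]
    simp
  have key : ∀ A : Set (ℕ → ℕ → ℕ), P A = P (A ∩ {t | IsInfYT t}) := by
    intro A
    apply le_antisymm
    · calc P A = P ((A ∩ {t | IsInfYT t}) ∪ (A \ {t | IsInfYT t})) := by
            rw [Set.inter_union_diff]
        _ ≤ P (A ∩ {t | IsInfYT t}) + P (A \ {t | IsInfYT t}) := measure_union_le _ _
        _ ≤ P (A ∩ {t | IsInfYT t}) + P {t | IsInfYT t}ᶜ :=
            add_le_add le_rfl (measure_mono (Set.diff_subset_compl A _))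
        _ = P (A ∩ {t | IsInfYT t}) := by rw [hIc, add_zero]
    · exact measure_mono Set.inter_subset_left
  have hcylI : ∀ (ν : YoungDiagram) (s : SYT ν),
      P (cylEvent ν s ∩ {t | IsInfYT t})
        = ENNReal.ofReal ((fSYT ν : ℝ) / (Nat.factorial ν.card)) := by
    intro ν s
    rw [← key, hcylP]
  have hd1 := QP.decomp (n := n) {t | qpos t n = c} (fun p => QP.qS p.2 = c)
    (by
      intro t ht p hcard hcyl
      simp only [Set.mem_setOf_eq]
      rw [QP.qpos_cyl hcard ht hcyl (hcard ▸ hn)])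
  have hd2 := QP.decomp (n := n) {t | t c.1 c.2 = n} (fun p => p.2.entry c.1 c.2 = n)
    (by
      intro t ht p hcard hcyl
      simp only [Set.mem_setOf_eq]
      exact QP.entry_cyl hn hcard ht hcyl c)
  have hmeas1 : ∀ p : {p : Σ ν : YoungDiagram, SYT ν // p.1.card = n ∧ QP.qS p.2 = c},
      MeasurableSet (cylEvent p.1.1 p.1.2 ∩ {t | IsInfYT t}) :=
    fun p => (QP.meas_cyl _ _).inter hImeas
  have hmeas2 : ∀ p : {p : Σ ν : YoungDiagram, SYT ν // p.1.card = n
        ∧ p.2.entry c.1 c.2 = n},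
      MeasurableSet (cylEvent p.1.1 p.1.2 ∩ {t | IsInfYT t}) :=
    fun p => (QP.meas_cyl _ _).inter hImeas
  have hdisj1 : Pairwise (Function.onFun Disjoint
      (fun p : {p : Σ ν : YoungDiagram, SYT ν // p.1.card = n ∧ QP.qS p.2 = c} =>
        cylEvent p.1.1 p.1.2 ∩ {t | IsInfYT t})) := by
    intro p q hpq
    rw [Function.onFun, Set.disjoint_left]
    intro t htp htq
    exact hpq (Subtype.ext (QP.pair_eq p.2.1 q.2.1 htp.2 htp.1 htq.1))
  have hdisj2 : Pairwise (Function.onFun Disjoint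
      (fun p : {p : Σ ν : YoungDiagram, SYT ν // p.1.card = n
          ∧ p.2.entry c.1 c.2 = n} =>
        cylEvent p.1.1 p.1.2 ∩ {t | IsInfYT t})) := by
    intro p q hpq
    rw [Function.onFun, Set.disjoint_left]
    intro t htp htq
    exact hpq (Subtype.ext (QP.pair_eq p.2.1 q.2.1 htp.2 htp.1 htq.1))
  rw [key {t | qpos t n = c}, key {t | t c.1 c.2 = n}, hd1, hd2,
    measure_iUnion hdisj1 hmeas1, measure_iUnion hdisj2 hmeas2]
  have hval1 : ∀ p : {p : Σ ν : YoungDiagram, SYT ν // p.1.card = n ∧ QP.qS p.2 = c},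
      P (cylEvent p.1.1 p.1.2 ∩ {t | IsInfYT t})
        = ENNReal.ofReal ((fSYT p.1.1 : ℝ) / (Nat.factorial n)) := by
    intro p
    rw [hcylI, p.2.1]
  have hval2 : ∀ p : {p : Σ ν : YoungDiagram, SYT ν // p.1.card = n
        ∧ p.2.entry c.1 c.2 = n},
      P (cylEvent p.1.1 p.1.2 ∩ {t | IsInfYT t})
        = ENNReal.ofReal ((fSYT p.1.1 : ℝ) / (Nat.factorial n)) := by
    intro p
    rw [hcylI, p.2.1]
  rw [tsum_congr hval1, tsum_congr hval2]
  exact Equiv.tsum_eq (QP.eG n hn c)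
    (fun q => ENNReal.ofReal ((fSYT q.1.1 : ℝ) / (Nat.factorial n)))


end QP

/-- Under the Plancherel measure, the position `q_n` of the naturally
parametrized jeu de taquin path has the same distribution as the position `d_n` of the
box added at step `n` of the Plancherel growth process (i.e. the cell containing the
entry `n`). -/
theorem qpos_distribution (P : Measure (ℕ → ℕ → ℕ)) (hP : PlancherelLike P)
    (n : ℕ) (hn : 1 ≤ n) (c : ℕ × ℕ) :
    P { t | qpos t n = c } = P { t | t c.1 c.2 = n } := by
  exact QP.qpos_distribution_aux P hP n hn c
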